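/- (Lemma 6) Let x₀ : M and let T ≥ 1 be the minimal period of x₀, i.e. F^[T] x₀ = x₀ and F^[j] x₀ ≠ x₀ for 1 ≤ j < T. Let S = {x : M | ∃ n : ℕ, F^[n] x = x₀} be the connected component of states eventually reaching x₀, and for x ∈ S let D x be the least n with F^[n] x = x₀. Let k : ℕ and λ = exp(2 π i k / T). Then the observable c : M → ℂ defined by c x = λ^(−D x) for x ∈ S and c x = 0 for x ∉ S is a Koopman eigenfunction with eigenvalue λ: c ∘ F = λ • c. -/

import Mathlib

/-- Lemma 6: let `T ≥ 1` be the minimal period of `x₀`, let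
`S = {x | ∃ n, F^[n] x = x₀}` be the connected component of states eventually reaching
`x₀`, and for `x ∈ S` let `D x` be the least `n` with `F^[n] x = x₀`. For
`λ = exp(2πik/T)`, the observable `c` with `c x = λ^(−D x)` on `S` and `c x = 0` off `S`
is a Koopman eigenfunction with eigenvalue `λ`: `c ∘ F = λ • c`. -/
theorem connected_component_periodic_orbit_eigenfunction
    {M : Type*} [Fintype M] [Nonempty M] [DecidableEq M] (F : M → M)
    (x₀ : M) (T : ℕ) (hT : 1 ≤ T) (hper : F^[T] x₀ = x₀)
    (hmin : ∀ j : ℕ, 1 ≤ j → j < T → F^[j] x₀ ≠ x₀)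
    (k : ℕ) (lam : ℂ) (hlam : lam = Complex.exp (2 * Real.pi * Complex.I * k / T))
    (c : M → ℂ)
    (hc₁ : ∀ (x : M) (h : ∃ n : ℕ, F^[n] x = x₀), c x = lam ^ (-(Nat.find h : ℤ)))
    (hc₂ : ∀ x : M, ¬ (∃ n : ℕ, F^[n] x = x₀) → c x = 0) :
    c ∘ F = lam • c := by
  have hlam0 : lam ≠ 0 := by rw [hlam]; exact Complex.exp_ne_zero _
  have hT0 : (T : ℂ) ≠ 0 := Nat.cast_ne_zero.mpr (by omega)
  have hlamT : lam ^ T = 1 := by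
    rw [hlam, ← Complex.exp_nat_mul]
    have : (T : ℂ) * (2 * Real.pi * Complex.I * k / T) = k * (2 * Real.pi * Complex.I) := by
      field_simp
    rw [this]
    exact_mod_cast Complex.exp_int_mul_two_pi_mul_I k
  have key : ∀ (m : ℕ) (y : M), F^[m] (F y) = F^[m + 1] y := fun m y =>
    (Function.iterate_succ_apply F m y).symm
  funext x
  simp only [Function.comp_apply, Pi.smul_apply, smul_eq_mul]
  by_cases h : ∃ n : ℕ, F^[n] x = x₀
  · obtain ⟨n, hn⟩ := h
    have h : ∃ n : ℕ, F^[n] x = x₀ := ⟨n, hn⟩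
    have h' : ∃ m : ℕ, F^[m] (F x) = x₀ := by
      refine ⟨n + (T - 1), ?_⟩
      rw [key]
      have : n + (T - 1) + 1 = T + n := by omega
      rw [this, Function.iterate_add_apply, hn, hper]
    rw [hc₁ x h, hc₁ (F x) h']
    set d := Nat.find h with hd
    set d' := Nat.find h' with hd'
    have hfd : F^[d] x = x₀ := Nat.find_spec h
    have hfd' : F^[d' + 1] x = x₀ := by
      have := Nat.find_spec h'
      rwa [key] at this
    by_cases hd0 : d = 0
    · -- x = x₀
      have hx : x = x₀ := by simpa [hd0] using hfd
      have hd'val : d' = T - 1 := by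
        have hle : d' ≤ T - 1 := by
          apply Nat.find_le
          show F^[T - 1] (F x) = x₀
          rw [hx, key]
          have : T - 1 + 1 = T := by omega
          rw [this]; exact hper
        have hge : ¬ d' < T - 1 := by
          intro hlt
          exact hmin (d' + 1) (by omega) (by omega) (hx ▸ hfd')
        omega
      rw [hd'val, hd0]
      have hc : ((T - 1 : ℕ) : ℤ) = (T : ℤ) - 1 := by
        have := Nat.cast_sub hT (R := ℤ); simpa using this
      rw [hc]
      have : lam ^ (-((T:ℤ) - 1)) = lam ^ (1 - (T:ℤ)) := by ring_nf
      rw [this, zpow_sub₀ hlam0, zpow_natCast, hlamT]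
      simp
    · -- d ≥ 1, d' = d - 1
      have hd'val : d' = d - 1 := by
        have hle : d' ≤ d - 1 := by
          apply Nat.find_le
          show F^[d - 1] (F x) = x₀
          rw [key]
          have : d - 1 + 1 = d := by omega
          rw [this]; exact hfd
        have hge : ¬ d' < d - 1 := by
          intro hlt
          have : d ≤ d' + 1 := Nat.find_le hfd'
          omega
        omega
      rw [hd'val]
      have hc : ((d - 1 : ℕ) : ℤ) = (d : ℤ) - 1 := by
        have := Nat.cast_sub (by omega : 1 ≤ d) (R := ℤ); simpa using this
      rw [hc]
      rw [show -((d:ℤ) - 1) = 1 + -(d:ℤ) by ring, zpow_add₀ hlam0]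
      simp
  · have h' : ¬ ∃ m : ℕ, F^[m] (F x) = x₀ := by
      rintro ⟨m, hm⟩
      exact h ⟨m + 1, by rwa [Function.iterate_succ_apply]⟩
    rw [hc₂ x h, hc₂ (F x) h', mul_zero]
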